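/- (Proposition 1, first part: Upper Bound of Bias.) Under the balanced within-stratum design, the absolute difference between the overall difference-in-means estimator and the inverse-probability-weighting estimator satisfies |τ̂_DIM − τ̂_IPW| ≤ 2 · (1/π̂_inf − 1) · Σ_{x ∈ 𝒳, n_x > 0} (n_x / n) · |τ̂_HTE(x)|, where π̂_inf = min_{x ∈ 𝒳} π̂(x). -/

import Mathlib

open Finset

noncomputable section

variable {N : ℕ} {𝒳 : Type*} [Fintype 𝒳] [DecidableEq 𝒳]

/-- Number of sampled units in stratum `x`: `n_x = #{i : S_i = 1, X_i = x}`. -/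
def nStratum (X : Fin N → 𝒳) (S : Fin N → Bool) (x : 𝒳) : ℕ :=
  (univ.filter fun i => S i = true ∧ X i = x).card

/-- Total number of sampled units: `n = #{i : S_i = 1}`. -/
def nSample (S : Fin N → Bool) : ℕ :=
  (univ.filter fun i => S i = true).card

/-- Stratum-level difference-in-means estimator `τ̂_HTE(x)`. -/
def tauHTE (X : Fin N → 𝒳) (S W : Fin N → Bool) (Y1 Y0 : Fin N → ℝ) (x : 𝒳) : ℝ :=
  (2 / (nStratum X S x : ℝ)) *
      ∑ i ∈ univ.filter (fun i => S i = true ∧ X i = x ∧ W i = true), Y1 i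
    - (2 / (nStratum X S x : ℝ)) *
      ∑ i ∈ univ.filter (fun i => S i = true ∧ X i = x ∧ W i = false), Y0 i

/-- Overall difference-in-means estimator `τ̂_DIM`. -/
def tauDIM (S W : Fin N → Bool) (Y1 Y0 : Fin N → ℝ) : ℝ :=
  (1 / ((univ.filter fun i => S i = true ∧ W i = true).card : ℝ)) *
      ∑ i ∈ univ.filter (fun i => S i = true ∧ W i = true), Y1 i
    - (1 / ((univ.filter fun i => S i = true ∧ W i = false).card : ℝ)) *
      ∑ i ∈ univ.filter (fun i => S i = true ∧ W i = false), Y0 i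

/-- Inverse-probability-weighting estimator `τ̂_IPW` with weight function `π̂`. -/
def tauIPW (X : Fin N → 𝒳) (S W : Fin N → Bool) (Y1 Y0 : Fin N → ℝ) (piHat : 𝒳 → ℝ) : ℝ :=
  (1 / ((univ.filter fun i => S i = true ∧ W i = true).card : ℝ)) *
      ∑ i ∈ univ.filter (fun i => S i = true ∧ W i = true), Y1 i / piHat (X i)
    - (1 / ((univ.filter fun i => S i = true ∧ W i = false).card : ℝ)) *
      ∑ i ∈ univ.filter (fun i => S i = true ∧ W i = false), Y0 i / piHat (X i)

/-- Balanced within-stratum design: in every nonempty stratum, the number of sampled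
treated units equals the number of sampled control units, and both are positive. -/
def BalancedDesign (X : Fin N → 𝒳) (S W : Fin N → Bool) : Prop :=
  ∀ x : 𝒳, 0 < nStratum X S x →
    (univ.filter fun i => S i = true ∧ X i = x ∧ W i = true).card =
        (univ.filter fun i => S i = true ∧ X i = x ∧ W i = false).card ∧
    0 < (univ.filter fun i => S i = true ∧ X i = x ∧ W i = true).card

/-- (Proposition 1, first part: Upper Bound of Bias.) Under the balanced within-stratum
design, the absolute difference between the overall difference-in-means estimator and the
inverse-probability-weighting estimator satisfies
`|τ̂_DIM − τ̂_IPW| ≤ 2 · (1/π̂_inf − 1) · Σ_{x, n_x > 0} (n_x / n) · |τ̂_HTE(x)|`,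
where `π̂_inf = min_{x ∈ 𝒳} π̂(x)`. -/
theorem abs_tauDIM_sub_tauIPW_le_two_mul
    [Nonempty 𝒳]
    (X : Fin N → 𝒳) (S W : Fin N → Bool) (Y1 Y0 : Fin N → ℝ) (piHat : 𝒳 → ℝ)
    (hpi : ∀ x, 0 < piHat x ∧ piHat x ≤ 1)
    (hn : 0 < nSample S) (hbal : BalancedDesign X S W) :
    |tauDIM S W Y1 Y0 - tauIPW X S W Y1 Y0 piHat| ≤
      2 * (1 / (univ.inf' univ_nonempty piHat) - 1) *
        ∑ x ∈ univ.filter (fun x => 0 < nStratum X S x),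
          ((nStratum X S x : ℝ) / (nSample S : ℝ)) * |tauHTE X S W Y1 Y0 x| := by
  classical
  set T := univ.filter (fun i : Fin N => S i = true ∧ W i = true) with hT
  set C := univ.filter (fun i : Fin N => S i = true ∧ W i = false) with hC
  set A : 𝒳 → Finset (Fin N) :=
    fun x => univ.filter (fun i => S i = true ∧ X i = x ∧ W i = true) with hA
  set B : 𝒳 → Finset (Fin N) :=
    fun x => univ.filter (fun i => S i = true ∧ X i = x ∧ W i = false) with hB
  have hfibT : ∀ x, T.filter (fun i => X i = x) = A x := by
    intro x; ext i; simp [hT, hA, Finset.filter_filter]; tauto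
  have hfibC : ∀ x, C.filter (fun i => X i = x) = B x := by
    intro x; ext i; simp [hC, hB, Finset.filter_filter]; tauto
  have hnx : ∀ x, nStratum X S x = (A x).card + (B x).card := by
    intro x
    have h := Finset.card_filter_add_card_filter_not
      (s := univ.filter (fun i : Fin N => S i = true ∧ X i = x))
      (p := fun i => W i = true)
    have h1 : (univ.filter (fun i : Fin N => S i = true ∧ X i = x)).filter
        (fun i => W i = true) = A x := by
      ext i; simp [hA, Finset.filter_filter]; tauto
    have h2 : (univ.filter (fun i : Fin N => S i = true ∧ X i = x)).filter
        (fun i => ¬ W i = true) = B x := by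
      ext i; simp [hB, Finset.filter_filter]; tauto
    rw [h1, h2] at h
    rw [nStratum, ← h]
  have hAB : ∀ x, (B x).card = (A x).card := by
    intro x
    rcases Nat.eq_zero_or_pos (nStratum X S x) with h0 | hpos
    · have := hnx x
      omega
    · exact ((hbal x hpos).1).symm
  have hnx2 : ∀ x, nStratum X S x = 2 * (A x).card := by
    intro x; rw [hnx, hAB]; ring
  have hTcard : T.card = ∑ x, (A x).card := by
    rw [Finset.card_eq_sum_card_fiberwise (f := X) (t := univ) (fun i _ => mem_univ (X i))]
    exact Finset.sum_congr rfl fun x _ => by rw [hfibT]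
  have hn2 : nSample S = 2 * T.card := by
    rw [nSample,
      Finset.card_eq_sum_card_fiberwise (f := X) (t := univ) (fun i _ => mem_univ (X i)),
      hTcard, Finset.mul_sum]
    refine Finset.sum_congr rfl fun x _ => ?_
    have h1 : (univ.filter (fun i : Fin N => S i = true)).filter (fun i => X i = x) =
        univ.filter (fun i : Fin N => S i = true ∧ X i = x) := by
      ext i; simp [Finset.filter_filter]
    rw [h1, ← nStratum, hnx2]
  have hCcard : C.card = T.card := by
    rw [hTcard, Finset.card_eq_sum_card_fiberwise (f := X) (t := univ) (fun i _ => mem_univ (X i))]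
    refine Finset.sum_congr rfl fun x _ => by rw [hfibC, hAB]
  have hTpos : 0 < T.card := by omega
  have htR : (0:ℝ) < (T.card : ℝ) := by exact_mod_cast hTpos
  -- fiberwise sums
  have hsplitT : ∑ i ∈ T, (Y1 i - Y1 i / piHat (X i)) =
      ∑ x, (1 - 1 / piHat x) * ∑ i ∈ A x, Y1 i := by
    rw [← Finset.sum_fiberwise_of_maps_to (g := X) (t := univ) (fun i _ => mem_univ (X i))]
    refine Finset.sum_congr rfl fun x _ => ?_
    rw [hfibT, Finset.mul_sum]
    refine Finset.sum_congr rfl fun i hi => ?_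
    have hx : X i = x := by
      have h : S i = true ∧ X i = x ∧ W i = true := by simpa [hA] using hi
      exact h.2.1
    rw [hx]; ring
  have hsplitC : ∑ i ∈ C, (Y0 i - Y0 i / piHat (X i)) =
      ∑ x, (1 - 1 / piHat x) * ∑ i ∈ B x, Y0 i := by
    rw [← Finset.sum_fiberwise_of_maps_to (g := X) (t := univ) (fun i _ => mem_univ (X i))]
    refine Finset.sum_congr rfl fun x _ => ?_
    rw [hfibC, Finset.mul_sum]
    refine Finset.sum_congr rfl fun i hi => ?_
    have hx : X i = x := by
      have h : S i = true ∧ X i = x ∧ W i = false := by simpa [hB] using hi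
      exact h.2.1
    rw [hx]; ring
  -- key identity
  have key : tauDIM S W Y1 Y0 - tauIPW X S W Y1 Y0 piHat =
      ∑ x, (1 / (T.card : ℝ)) * (1 - 1 / piHat x) *
        ((∑ i ∈ A x, Y1 i) - ∑ i ∈ B x, Y0 i) := by
    have hexp : tauDIM S W Y1 Y0 - tauIPW X S W Y1 Y0 piHat =
        (1 / (T.card : ℝ)) * (∑ i ∈ T, (Y1 i - Y1 i / piHat (X i)))
        - (1 / (T.card : ℝ)) * (∑ i ∈ C, (Y0 i - Y0 i / piHat (X i))) := by
      rw [tauDIM, tauIPW, ← hT, ← hC, hCcard, Finset.sum_sub_distrib,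
        Finset.sum_sub_distrib]
      ring
    rw [hexp, hsplitT, hsplitC, Finset.mul_sum, Finset.mul_sum, ← Finset.sum_sub_distrib]
    exact Finset.sum_congr rfl fun x _ => by ring
  -- rewrite as sum over nonempty strata with tauHTE
  have key2 : tauDIM S W Y1 Y0 - tauIPW X S W Y1 Y0 piHat =
      ∑ x ∈ univ.filter (fun x => 0 < nStratum X S x),
        ((nStratum X S x : ℝ) / (nSample S : ℝ)) * (1 - 1 / piHat x) *
          tauHTE X S W Y1 Y0 x := by
    rw [key, Finset.sum_filter]
    refine Finset.sum_congr rfl fun x _ => ?_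
    by_cases hpos : 0 < nStratum X S x
    · simp only [hpos, if_true]
      have hnxR : (0:ℝ) < (nStratum X S x : ℝ) := by exact_mod_cast hpos
      have hnR : (nSample S : ℝ) = 2 * (T.card : ℝ) := by exact_mod_cast hn2
      have e1 : (univ.filter (fun i : Fin N => S i = true ∧ X i = x ∧ W i = true)) = A x := rfl
      have e2 : (univ.filter (fun i : Fin N => S i = true ∧ X i = x ∧ W i = false)) = B x := rfl
      rw [tauHTE, e1, e2, hnR]
      field_simp
    · simp only [hpos, if_false]
      have h0 : nStratum X S x = 0 := Nat.eq_zero_of_not_pos hpos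
      have hA0 : A x = ∅ := by
        have := hnx2 x
        rw [h0] at this
        exact Finset.card_eq_zero.mp (by omega)
      have hB0 : B x = ∅ := by
        have := hnx x
        rw [h0] at this
        exact Finset.card_eq_zero.mp (by omega)
      simp [hA0, hB0]
  -- bounding
  set pinf := univ.inf' univ_nonempty piHat with hpinf
  have hpinf_le : ∀ x : 𝒳, pinf ≤ piHat x := fun x => Finset.inf'_le _ (mem_univ x)
  have hpinf_pos : 0 < pinf := by
    obtain ⟨x0, _, hx0⟩ := Finset.exists_mem_eq_inf' univ_nonempty piHat
    rw [hpinf, hx0]; exact (hpi x0).1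
  have hpinf_le1 : pinf ≤ 1 := by
    obtain ⟨x0, _, hx0⟩ := Finset.exists_mem_eq_inf' univ_nonempty piHat
    rw [hpinf, hx0]; exact (hpi x0).2
  rw [key2, Finset.mul_sum]
  refine le_trans (Finset.abs_sum_le_sum_abs _ _) (Finset.sum_le_sum fun x _ => ?_)
  have h1 : |((nStratum X S x : ℝ) / (nSample S : ℝ)) * (1 - 1 / piHat x) *
      tauHTE X S W Y1 Y0 x| =
      ((nStratum X S x : ℝ) / (nSample S : ℝ)) * |1 - 1 / piHat x| *
        |tauHTE X S W Y1 Y0 x| := by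
    rw [abs_mul, abs_mul, abs_of_nonneg (by positivity)]
  rw [h1]
  have hx1 : |1 - 1 / piHat x| ≤ 2 * (1 / pinf - 1) := by
    have hpx : 0 < piHat x := (hpi x).1
    have h1x : 1 ≤ 1 / piHat x := by
      rw [le_div_iff₀ hpx]; simpa using (hpi x).2
    rw [abs_sub_comm, abs_of_nonneg (by linarith)]
    have h2 : 1 / piHat x ≤ 1 / pinf := by
      apply one_div_le_one_div_of_le hpinf_pos (hpinf_le x)
    have h3 : (1:ℝ) ≤ 1 / pinf := by
      rw [le_div_iff₀ hpinf_pos]; simpa using hpinf_le1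
    linarith
  calc ((nStratum X S x : ℝ) / (nSample S : ℝ)) * |1 - 1 / piHat x| *
        |tauHTE X S W Y1 Y0 x|
      ≤ ((nStratum X S x : ℝ) / (nSample S : ℝ)) * (2 * (1 / pinf - 1)) *
        |tauHTE X S W Y1 Y0 x| := by
        apply mul_le_mul_of_nonneg_right _ (abs_nonneg _)
        exact mul_le_mul_of_nonneg_left hx1 (by positivity)
    _ = 2 * (1 / pinf - 1) *
        (((nStratum X S x : ℝ) / (nSample S : ℝ)) * |tauHTE X S W Y1 Y0 x|) := by ring
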